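/- arXiv:1110.3641 — 6 statements merged into one kernel-verified Lean document; each statement's English description precedes it below -/
import Mathlib

section
/- There exists a matrix polynomial A(x) of degree d ≥ 1 with n×n coefficients (n ≥ 2) such that col(A) has full column rank and row(A) has full row rank, but A(x) is singular (det A(x) ≡ 0). -/
open Matrix Polynomial
open scoped ComplexOrder

noncomputable def myA : ℕ → Matrix (Fin 2) (Fin 2) ℂ
  | 0 => !![1,0;0,0]
  | 1 => !![0,1;1,0]
  | 2 => !![0,0;0,1]
  | _ => 0

lemma unit2 : IsUnit (!![(2:ℂ),0;0,2]) := by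
  apply (Matrix.isUnit_iff_isUnit_det _).2
  simp [Matrix.det_fin_two_of]

lemma rank2 : (!![(2:ℂ),0;0,2]).rank = 2 := by
  simpa using Matrix.rank_of_isUnit _ unit2

lemma gram_col :
    ((Matrix.of fun (p : Fin 3 × Fin 2) (j : Fin 2) => myA p.1 p.2 j)ᴴ *
      (Matrix.of fun (p : Fin 3 × Fin 2) (j : Fin 2) => myA p.1 p.2 j)) = !![(2:ℂ),0;0,2] := by
  ext i j
  fin_cases i <;> fin_cases j <;>
    simp [Matrix.mul_apply, Fintype.sum_prod_type, Fin.sum_univ_succ, myA] <;> norm_num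

lemma gram_row :
    ((Matrix.of fun (i : Fin 2) (q : Fin 3 × Fin 2) => myA q.1 i q.2) *
      (Matrix.of fun (i : Fin 2) (q : Fin 3 × Fin 2) => myA q.1 i q.2)ᴴ) = !![(2:ℂ),0;0,2] := by
  ext i j
  fin_cases i <;> fin_cases j <;>
    simp [Matrix.mul_apply, Fintype.sum_prod_type, Fin.sum_univ_succ, myA] <;> norm_num

/-- There is a singular matrix polynomial (with `n ≥ 2`, `d ≥ 1`) whose `col` has full
column rank and whose `row` has full row rank. -/
theorem stmt_2 :
    ∃ (n d : ℕ) (A : ℕ → Matrix (Fin n) (Fin n) ℂ),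
      2 ≤ n ∧ 1 ≤ d ∧
      (Matrix.of fun (p : Fin (d + 1) × Fin n) (j : Fin n) => A p.1 p.2 j).rank = n ∧
      (Matrix.of fun (i : Fin n) (q : Fin (d + 1) × Fin n) => A q.1 i q.2).rank = n ∧
      Matrix.det (Matrix.of fun i j =>
        ∑ k ∈ Finset.range (d + 1), Polynomial.C (A k i j) * Polynomial.X ^ k) = 0 := by
  refine ⟨2, 2, myA, le_refl 2, by norm_num, ?_, ?_, ?_⟩
  · rw [← Matrix.rank_conjTranspose_mul_self, gram_col, rank2]
  · rw [← Matrix.rank_self_mul_conjTranspose, gram_row, rank2]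
  · rw [Matrix.det_fin_two]
    simp [Finset.sum_range_succ, myA]
    ring
end

section
/- Let L(λ,μ) = μL_0 − λL_1 and M(λ,μ) = μM_0 − λM_1 be N×N complex matrix pencils with M_1 L_0 = M_0 L_1 and [M_0 −M_1] (the N×2N matrix) of full row rank N. If L is regular (det(μL_0 − λL_1) not identically zero as a homogeneous polynomial) then for any (α,β) with L(α,β) invertible, M(α,β) is also invertible. -/
open Matrix

lemma aux_rank_lt {N : ℕ} {m : Type*} [Fintype m] [DecidableEq m] (A : Matrix (Fin N) m ℂ)
    (v : Fin N → ℂ) (hv : v ≠ 0) (hvA : A.vecMul v = 0) : A.rank < N := by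
  have hrt : Aᵀ.rank = A.rank := Matrix.rank_transpose A
  have hker : v ∈ LinearMap.ker Aᵀ.mulVecLin := by
    simp [Matrix.mulVecLin_apply, Matrix.mulVec_transpose, hvA]
  have hkerpos : 0 < Module.finrank ℂ (LinearMap.ker Aᵀ.mulVecLin) := by
    rcases Nat.eq_zero_or_pos (Module.finrank ℂ (LinearMap.ker Aᵀ.mulVecLin)) with h | h
    · exfalso
      have := (Submodule.finrank_eq_zero (R := ℂ)
        (S := LinearMap.ker Aᵀ.mulVecLin)).mp h
      rw [this] at hker
      exact hv hker
    · exact h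
  have hrn := LinearMap.finrank_range_add_finrank_ker Aᵀ.mulVecLin
  have hdom : Module.finrank ℂ (Fin N → ℂ) = N := by simp
  rw [hdom] at hrn
  have : Aᵀ.rank = Module.finrank ℂ (LinearMap.range Aᵀ.mulVecLin) := rfl
  omega

/-- Left duality: if `M₁L₀ = M₀L₁`, `[M₀ −M₁]` has full row rank and the pencil `L`
is regular, then `M(α,β)` is invertible whenever `L(α,β)` is. -/
theorem stmt_3 (N : ℕ) (L0 L1 M0 M1 : Matrix (Fin N) (Fin N) ℂ)
    (h1 : M1 * L0 = M0 * L1)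
    (h2 : (Matrix.fromCols M0 (-M1)).rank = N)
    (hreg : ∃ a b : ℂ, IsUnit (b • L0 - a • L1)) :
    ∀ α β : ℂ, IsUnit (β • L0 - α • L1) → IsUnit (β • M0 - α • M1) := by
  intro α β hL
  set L : Matrix (Fin N) (Fin N) ℂ := β • L0 - α • L1 with hLdef
  set M : Matrix (Fin N) (Fin N) ℂ := β • M0 - α • M1 with hMdef
  by_contra hM
  -- M is singular, get a nonzero left null vector
  have hdet : M.det = 0 := by
    by_contra hd
    exact hM ((Matrix.isUnit_iff_isUnit_det M).mpr (isUnit_iff_ne_zero.mpr hd))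
  obtain ⟨v, hv, hvM⟩ := (Matrix.exists_vecMul_eq_zero_iff).mpr hdet
  -- cancellation with invertible L
  have hcancel : ∀ w : Fin N → ℂ, L.vecMul w = 0 → w = 0 := by
    intro w hw
    have hLi : L * L⁻¹ = 1 := Matrix.mul_nonsing_inv L
      ((Matrix.isUnit_iff_isUnit_det L).mp hL)
    have := congrArg (fun u => L⁻¹.vecMul u) hw
    simpa [Matrix.vecMul_vecMul, hLi] using this
  -- key identities
  have key0 : M0 * L = M * L0 := by
    simp only [hLdef, hMdef, Matrix.mul_sub, Matrix.sub_mul, Matrix.mul_smul,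
      Matrix.smul_mul, h1]
  have key1 : M1 * L = M * L1 := by
    simp only [hLdef, hMdef, Matrix.mul_sub, Matrix.sub_mul, Matrix.mul_smul,
      Matrix.smul_mul, h1]
  have hv0 : M0.vecMul v = 0 := by
    apply hcancel
    rw [Matrix.vecMul_vecMul, key0, ← Matrix.vecMul_vecMul, hvM,
      Matrix.zero_vecMul]
  have hv1 : M1.vecMul v = 0 := by
    apply hcancel
    rw [Matrix.vecMul_vecMul, key1, ← Matrix.vecMul_vecMul, hvM,
      Matrix.zero_vecMul]
  -- contradiction with full row rank
  have hfc : (Matrix.fromCols M0 (-M1)).vecMul v = 0 := by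
    ext j
    cases j with
    | inl j => simp [Matrix.vecMul_fromCols, hv0]
    | inr j => simp [Matrix.vecMul_fromCols, Matrix.vecMul_neg, hv1]
  have := aux_rank_lt (Matrix.fromCols M0 (-M1)) v hv hfc
  omega
end

section
/- Let A(λ,μ) be a matrix polynomial such that col(A) = [A_0; A_1; …; A_d] has full column rank n, and let W ∈ ℂ^{dn×(d+1)n} be any full-row-rank matrix with W·col(A) = 0. Define W_0 = W·[0_{n×dn}; I_{dn}] and W_1 = W·[I_{dn}; 0_{n×dn}]. Then W_1 C_0 = W_0 C_1, where C_0, C_1 are the second companion form matrices of A. -/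
open Matrix

/-- `C₀ = diag(A₀, I, …, I)` (second companion form). -/
noncomputable def compC0 (n d : ℕ) (A : ℕ → Matrix (Fin n) (Fin n) ℂ) :
    Matrix (Fin d × Fin n) (Fin d × Fin n) ℂ :=
  Matrix.of fun p q =>
    if p.1 = q.1 then
      (if (p.1 : ℕ) = 0 then A 0 p.2 q.2 else if p.2 = q.2 then 1 else 0)
    else 0

/-- `C₁` with first block column `(−A₁, …, −A_d)ᵀ` and identity superdiagonal blocks. -/
noncomputable def compC1 (n d : ℕ) (A : ℕ → Matrix (Fin n) (Fin n) ℂ) :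
    Matrix (Fin d × Fin n) (Fin d × Fin n) ℂ :=
  Matrix.of fun p q =>
    (if (q.1 : ℕ) = 0 then -(A ((p.1 : ℕ) + 1) p.2 q.2) else 0) +
    (if (q.1 : ℕ) = (p.1 : ℕ) + 1 ∧ p.2 = q.2 then 1 else 0)

/-- `col A = [A₀; A₁; …; A_d]`. -/
noncomputable def colA (n d : ℕ) (A : ℕ → Matrix (Fin n) (Fin n) ℂ) :
    Matrix (Fin (d + 1) × Fin n) (Fin n) ℂ :=
  Matrix.of fun p j => A p.1 p.2 j

/-- The `(d+1)n × dn` block matrix `[0_{n×dn}; I_{dn}]`. -/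
noncomputable def blkLow (n d : ℕ) : Matrix (Fin (d + 1) × Fin n) (Fin d × Fin n) ℂ :=
  Matrix.of fun p q => if (p.1 : ℕ) = (q.1 : ℕ) + 1 ∧ p.2 = q.2 then 1 else 0

/-- The `(d+1)n × dn` block matrix `[I_{dn}; 0_{n×dn}]`. -/
noncomputable def blkHigh (n d : ℕ) : Matrix (Fin (d + 1) × Fin n) (Fin d × Fin n) ℂ :=
  Matrix.of fun p q => if (p.1 : ℕ) = (q.1 : ℕ) ∧ p.2 = q.2 then 1 else 0

noncomputable def Fmat (n d : ℕ) : Matrix (Fin n) (Fin d × Fin n) ℂ :=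
  Matrix.of fun j q => if (q.1 : ℕ) = 0 ∧ j = q.2 then 1 else 0

lemma key (n d : ℕ) (A : ℕ → Matrix (Fin n) (Fin n) ℂ) :
    blkHigh n d * compC0 n d A =
      blkLow n d * compC1 n d A + colA n d A * Fmat n d := by
  ext ⟨i, a⟩ ⟨j, b⟩
  simp only [mul_apply, Matrix.add_apply, blkHigh, blkLow, compC0, compC1, colA, Fmat, of_apply,
    Fintype.sum_prod_type, ite_and, ite_mul, mul_ite, one_mul, zero_mul, mul_one, mul_zero]
  simp only [Finset.sum_ite_eq, Finset.sum_ite_eq', Finset.mem_univ, if_true,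
    Finset.sum_ite_irrel, Finset.sum_const_zero]
  by_cases hi : (i : ℕ) = 0
  · rw [Finset.sum_eq_zero (fun x _ => by simp [hi])]
    by_cases hj : (j : ℕ) = 0 <;> simp [hi, hj, eq_comm]
  · obtain ⟨m, hm⟩ := Nat.exists_eq_succ_of_ne_zero hi
    have hmd : m < d := by omega
    rw [Finset.sum_eq_single ⟨m, hmd⟩ (fun x _ hx => by
      have : (i : ℕ) ≠ (x : ℕ) + 1 := by
        intro h; exact hx (Fin.ext (show (x : ℕ) = m by omega))
      simp [this]) (fun h => absurd (Finset.mem_univ _) h)]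
    simp only [hm]
    split_ifs <;> simp_all

/-- With `W₀ = W[0; I]` and `W₁ = W[I; 0]`, one has `W₁C₀ = W₀C₁`:
the pencil `μW₀ − λW₁` is a left dual of the second companion form. -/
theorem stmt_10 (n d : ℕ) (A : ℕ → Matrix (Fin n) (Fin n) ℂ)
    (W : Matrix (Fin d × Fin n) (Fin (d + 1) × Fin n) ℂ)
    (hcol : (colA n d A).rank = n)
    (hW : W.rank = d * n)
    (hWA : W * colA n d A = 0) :
    W * blkHigh n d * compC0 n d A = W * blkLow n d * compC1 n d A := by
  calc W * blkHigh n d * compC0 n d A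
      = W * (blkHigh n d * compC0 n d A) := by rw [Matrix.mul_assoc]
    _ = W * (blkLow n d * compC1 n d A + colA n d A * Fmat n d) := by rw [key]
    _ = W * blkLow n d * compC1 n d A + (W * colA n d A) * Fmat n d := by
        rw [Matrix.mul_add, Matrix.mul_assoc, Matrix.mul_assoc]
    _ = W * blkLow n d * compC1 n d A := by rw [hWA, Matrix.zero_mul, add_zero]
end

section
/- Let L_0, L_1 ∈ ℂ^{m×m} and suppose [L_0; L_1] = Π [Y; Z] where Π is a 2m×2m permutation matrix and Y ∈ ℂ^{m×m} is invertible. Define [M_1 −M_0] = [−Z Y^{-1}, I_m] Π^{-1}. Then M_1 L_0 = M_0 L_1 and [M_0 −M_1] has full row rank m. -/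
open Matrix

/-- Constructing a dual from a nonsingular submatrix: if `[L₀; L₁] = Π[Y; Z]` with `Π`
a permutation matrix and `Y` invertible, and `[M₁ −M₀] = [−ZY⁻¹, I]Π⁻¹`, then
`M₁L₀ = M₀L₁` and `[M₀ −M₁]` has full row rank. -/
theorem stmt_13 (m : ℕ) (L0 L1 Y Z M0 M1 : Matrix (Fin m) (Fin m) ℂ)
    (P : Matrix (Fin m ⊕ Fin m) (Fin m ⊕ Fin m) ℂ)
    (hP : ∃ σ : Equiv.Perm (Fin m ⊕ Fin m), ∀ i j, P i j = if σ j = i then 1 else 0)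
    (hY : IsUnit Y)
    (hL : Matrix.fromRows L0 L1 = P * Matrix.fromRows Y Z)
    (hM : Matrix.fromCols M1 (-M0) = Matrix.fromCols (-(Z * Y⁻¹)) 1 * P⁻¹) :
    M1 * L0 = M0 * L1 ∧ (Matrix.fromCols M0 (-M1)).rank = m := by
  obtain ⟨σ, hσ⟩ := hP
  have hPeq : P = (σ⁻¹).toPEquiv.toMatrix := by
    ext i j
    rw [hσ, PEquiv.toMatrix_toPEquiv_eq, Matrix.submatrix_apply, id_eq, Matrix.one_apply]
    congr 1
    rw [eq_iff_iff]
    constructor <;> rintro rfl <;> simp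
  have hPdet : IsUnit P.det := by
    rcases Int.units_eq_one_or (Equiv.Perm.sign σ⁻¹) with h | h <;>
      simp [hPeq, Matrix.det_permutation, h]
  have hYdet : IsUnit Y.det := (Matrix.isUnit_iff_isUnit_det Y).mp hY
  replace hM : Matrix.fromCols M1 (-M0) =
      Matrix.fromCols (-(Z * Y⁻¹)) (1 : Matrix (Fin m) (Fin m) ℂ) * P⁻¹ := hM
  -- key computation: [M₁ -M₀] * [L₀; L₁] = 0
  have key : M1 * L0 + (-M0) * L1 = 0 := by
    have : Matrix.fromCols M1 (-M0) * Matrix.fromRows L0 L1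
        = Matrix.fromCols (-(Z * Y⁻¹)) (1 : Matrix (Fin m) (Fin m) ℂ) * Matrix.fromRows Y Z := by
      rw [hM, hL, Matrix.mul_assoc, Matrix.nonsing_inv_mul_cancel_left _ _ hPdet]
    rw [Matrix.fromCols_mul_fromRows, Matrix.fromCols_mul_fromRows] at this
    rw [this, Matrix.one_mul, Matrix.neg_mul, Matrix.mul_assoc,
      Matrix.nonsing_inv_mul _ hYdet, Matrix.mul_one, neg_add_cancel]
  have h1 : M1 * L0 = M0 * L1 := by
    have := key
    rw [Matrix.neg_mul, add_neg_eq_zero] at this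
    exact this
  refine ⟨h1, ?_⟩
  -- S swaps the two column blocks with a sign
  set S : Matrix (Fin m ⊕ Fin m) (Fin m ⊕ Fin m) ℂ :=
    Matrix.fromBlocks 0 (-1) (-1) 0 with hS
  have hNS : Matrix.fromCols M0 (-M1) * S = Matrix.fromCols M1 (-M0) := by
    rw [hS, Matrix.fromCols_mul_fromBlocks]
    simp
  have hNP : Matrix.fromCols M1 (-M0) * P = Matrix.fromCols (-(Z * Y⁻¹)) (1 : Matrix (Fin m) (Fin m) ℂ) := by
    rw [hM, Matrix.nonsing_inv_mul_cancel_right _ _ hPdet]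
  have hone : Matrix.fromCols M0 (-M1) *
      (S * (P * (Matrix.fromRows 0 1 : Matrix (Fin m ⊕ Fin m) (Fin m) ℂ))) = 1 := by
    rw [← Matrix.mul_assoc, hNS, ← Matrix.mul_assoc, hNP,
      Matrix.fromCols_mul_fromRows]
    simp
  have hle : (Matrix.fromCols M0 (-M1)).rank ≤ m := by
    simpa using (Matrix.fromCols M0 (-M1)).rank_le_card_height
  have hge : m ≤ (Matrix.fromCols M0 (-M1)).rank := by
    have := Matrix.rank_mul_le_left (Matrix.fromCols M0 (-M1))
      (S * (P * (Matrix.fromRows 0 1 : Matrix (Fin m ⊕ Fin m) (Fin m) ℂ)))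
    rw [hone, Matrix.rank_one] at this
    simpa using this
  exact le_antisymm hle hge
end

section
/- Let L, M be N×N pencils with M₁L₀ = M₀L₁, [M₀ −M₁] of full row rank, and L regular. If ĥx ∈ ℂ^N is a right eigenvector of L at (λ,μ), i.e. (μL₀ − λL₁)ĥx = 0, and (α,β) is such that both L(α,β) and M(α,β) are invertible, then L(α,β)ĥx is a right eigenvector of M at (λ,μ), i.e. (μM₀ − λM₁)·L(α,β)·ĥx = 0. -/
open Matrix

/-- Eigenvector recovery under left duality: if `(μL₀ − λL₁)x̂ = 0` and both `L(α,β)`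
and `M(α,β)` are invertible, then `L(α,β)x̂` is a right eigenvector of `M` at `(λ,μ)`. -/
theorem stmt_18 (N : ℕ) (L0 L1 M0 M1 : Matrix (Fin N) (Fin N) ℂ)
    (h1 : M1 * L0 = M0 * L1)
    (h2 : (Matrix.fromCols M0 (-M1)).rank = N)
    (hreg : ∃ a b : ℂ, IsUnit (b • L0 - a • L1))
    (l m α β : ℂ) (xh : Fin N → ℂ)
    (hx : (m • L0 - l • L1) *ᵥ xh = 0)
    (hL : IsUnit (β • L0 - α • L1)) (hM : IsUnit (β • M0 - α • M1)) :
    (m • M0 - l • M1) *ᵥ ((β • L0 - α • L1) *ᵥ xh) = 0 := by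
  have key : (m • M0 - l • M1) * (β • L0 - α • L1)
      = (β • M0 - α • M1) * (m • L0 - l • L1) := by
    simp only [Matrix.sub_mul, Matrix.mul_sub, Matrix.smul_mul, Matrix.mul_smul,
      smul_smul, h1]
    module
  rw [Matrix.mulVec_mulVec, key, ← Matrix.mulVec_mulVec, hx, Matrix.mulVec_zero]
end

section
/- Let A(λ,μ) be regular of degree d with n×n coefficients and let W be a full-row-rank matrix with W·col(A) = 0. A pencil L(λ,μ) = μL₀ − λL₁ of size dn satisfies W₀L₁ = W₁L₀ (i.e., L is a right dual candidate of W(λ,μ)) if and only if there exists Z ∈ ℂ^{n×dn} with [0_{n×dn}; I_{dn}]L₁ − [I_{dn}; 0_{n×dn}]L₀ = col(A)·Z. -/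
open Matrix

/-- A pencil `L(λ,μ) = μL₀ − λL₁` satisfies `W₀L₁ = W₁L₀` (with `W₀ = W[0; I]`,
`W₁ = W[I; 0]`) if and only if `[0; I]L₁ − [I; 0]L₀ = col A ⬝ Z` for some `Z`
(the row-shifted-sum characterization generalizing `𝕃₂`). -/
theorem stmt_19 (n d : ℕ) (A : ℕ → Matrix (Fin n) (Fin n) ℂ)
    (hreg : ∃ a b : ℂ,
      IsUnit (∑ i ∈ Finset.range (d + 1), (a ^ i * b ^ (d - i)) • A i))
    (W : Matrix (Fin d × Fin n) (Fin (d + 1) × Fin n) ℂ)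
    (hW : W.rank = d * n)
    (hWA : W * colA n d A = 0)
    (L0 L1 : Matrix (Fin d × Fin n) (Fin d × Fin n) ℂ) :
    W * blkLow n d * L1 = W * blkHigh n d * L0 ↔
      ∃ Z : Matrix (Fin n) (Fin d × Fin n) ℂ,
        blkLow n d * L1 - blkHigh n d * L0 = colA n d A * Z := by
  classical
  set M := blkLow n d * L1 - blkHigh n d * L0 with hMdef
  have key : (W * blkLow n d * L1 = W * blkHigh n d * L0) ↔ W * M = 0 := by
    rw [hMdef, Matrix.mul_sub, sub_eq_zero, ← Matrix.mul_assoc, ← Matrix.mul_assoc]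
  rw [key]
  obtain ⟨a, b, hU⟩ := hreg
  -- injectivity of colA
  have hinj : Function.Injective (colA n d A).mulVecLin := by
    rw [← LinearMap.ker_eq_bot, LinearMap.ker_eq_bot']
    intro v hv
    have hAi : ∀ i : Fin (d + 1), (A i).mulVec v = 0 := by
      intro i
      funext k
      have := congrFun hv (i, k)
      simpa [colA, Matrix.mulVecLin, Matrix.mulVec, dotProduct] using this
    have sumMV : ∀ (s : Finset ℕ) (F : ℕ → Matrix (Fin n) (Fin n) ℂ),
        (∑ i ∈ s, F i) *ᵥ v = ∑ i ∈ s, F i *ᵥ v := by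
      intro s F
      induction s using Finset.induction_on with
      | empty => simp
      | insert x s h ih => rw [Finset.sum_insert h, Finset.sum_insert h, Matrix.add_mulVec, ih]
    have hS : (∑ i ∈ Finset.range (d + 1), (a ^ i * b ^ (d - i)) • A i).mulVec v = 0 := by
      rw [sumMV]
      refine Finset.sum_eq_zero fun i hi => ?_
      have hi' : i < d + 1 := Finset.mem_range.mp hi
      have := hAi ⟨i, hi'⟩
      rw [Matrix.smul_mulVec, this, smul_zero]
    obtain ⟨B, hB⟩ := hU.exists_left_inv
    calc v = ((B * _).mulVec v) := by rw [hB, Matrix.one_mulVec]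
    _ = B.mulVec ((∑ i ∈ Finset.range (d + 1), (a ^ i * b ^ (d - i)) • A i).mulVec v) := by
        rw [Matrix.mulVec_mulVec]
    _ = 0 := by rw [hS, Matrix.mulVec_zero]
  set f := W.mulVecLin with hf
  set g := (colA n d A).mulVecLin with hg
  have hle : LinearMap.range g ≤ LinearMap.ker f := by
    rintro _ ⟨x, rfl⟩
    have : f (g x) = (W * colA n d A).mulVecLin x := by rw [Matrix.mulVecLin_mul]; rfl
    simp [LinearMap.mem_ker, this, hWA]
  have hrg : Module.finrank ℂ (LinearMap.range g) = n := by
    rw [LinearMap.finrank_range_of_inj hinj]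
    simp
  have hkf : Module.finrank ℂ (LinearMap.ker f) = n := by
    have h1 := LinearMap.finrank_range_add_finrank_ker f
    have h2 : Module.finrank ℂ (LinearMap.range f) = d * n := hW
    have h3 : Module.finrank ℂ ((Fin (d + 1) × Fin n) → ℂ) = d * n + n := by
      simp [Nat.add_mul]
    rw [h2, h3] at h1
    exact Nat.add_left_cancel h1
  have heq : LinearMap.range g = LinearMap.ker f :=
    Submodule.eq_of_le_of_finrank_le hle (by rw [hkf, hrg])
  constructor
  · intro h0
    have hcol : ∀ j, ∃ z : Fin n → ℂ, g z = fun i => M i j := by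
      intro j
      have hk : (fun i => M i j) ∈ LinearMap.ker f := by
        have : f (fun i => M i j) = fun i => (W * M) i j := by
          funext i
          simp [hf, Matrix.mulVecLin, Matrix.mulVec, dotProduct, Matrix.mul_apply]
        rw [LinearMap.mem_ker, this, h0]
        funext i; simp
      rw [← heq] at hk
      exact hk
    choose z hz using hcol
    refine ⟨Matrix.of fun k j => z j k, ?_⟩
    funext p j
    have := congrFun (hz j) p
    simp only [hg, Matrix.mulVecLin_apply, Matrix.mulVec, dotProduct] at this
    rw [Matrix.mul_apply]
    simpa [Matrix.of_apply] using this.symm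
  · rintro ⟨Z, hZ⟩
    rw [hZ, ← Matrix.mul_assoc, hWA, Matrix.zero_mul]
end
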